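/- Less noisy comparison of BEC and BSC: let p ∈ [0,1/2] and ε ∈ [0,1] with ε ≤ 4p(1−p). Let A be any {0,1}-valued random variable, B = BEC(ε)(A), E = BSC(p)(A). Then B is less noisy than E: for every random variable U on a finite set such that U–A–(B,E) is a Markov chain, I(U;B) ≥ I(U;E). -/

import Mathlib

noncomputable section

namespace SLSC

open scoped BigOperators

variable {Ω : Type*} [Fintype Ω]

open Classical in
/-- Probability that the random variable `f` takes the value `x`, under the
probability mass function `w` on the finite sample space `Ω`. -/
def pr {X : Type*} (w : Ω → ℝ) (f : Ω → X) (x : X) : ℝ :=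
  ∑ ω, if f ω = x then w ω else 0

/-- `w` is a probability mass function on `Ω`. -/
def IsPMF (w : Ω → ℝ) : Prop := (∀ ω, 0 ≤ w ω) ∧ ∑ ω, w ω = 1

/-- Shannon entropy (base 2) of the random variable `f`. -/
def H {X : Type*} [Fintype X] (w : Ω → ℝ) (f : Ω → X) : ℝ :=
  -∑ x, pr w f x * Real.logb 2 (pr w f x)

/-- Conditional entropy `H(f | g)` (base 2). -/
def condH {X Y : Type*} [Fintype X] [Fintype Y] (w : Ω → ℝ) (f : Ω → X) (g : Ω → Y) : ℝ :=
  H w (fun ω => (f ω, g ω)) - H w g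

/-- Mutual information `I(f ; g)` (base 2). -/
def MI {X Y : Type*} [Fintype X] [Fintype Y] (w : Ω → ℝ) (f : Ω → X) (g : Ω → Y) : ℝ :=
  H w f + H w g - H w (fun ω => (f ω, g ω))

/-- Conditional mutual information `I(f ; g | h)` (base 2). -/
def condMI {X Y Z : Type*} [Fintype X] [Fintype Y] [Fintype Z]
    (w : Ω → ℝ) (f : Ω → X) (g : Ω → Y) (h : Ω → Z) : ℝ :=
  condH w f h - condH w f (fun ω => (g ω, h ω))

/-- Expectation of the real random variable `f`. -/
def expect (w : Ω → ℝ) (f : Ω → ℝ) : ℝ := ∑ ω, w ω * f ω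

/-- Markov chain `f – g – h` : `f` and `h` are conditionally independent given `g`. -/
def Markov {X Y Z : Type*} (w : Ω → ℝ) (f : Ω → X) (g : Ω → Y) (h : Ω → Z) : Prop :=
  ∀ x y z,
    pr w (fun ω => (f ω, g ω, h ω)) (x, y, z) * pr w g y
      = pr w (fun ω => (f ω, g ω)) (x, y) * pr w (fun ω => (g ω, h ω)) (y, z)

/-- Markov chain `f – g – h – k` : each variable is conditionally independent of
the preceding ones given its immediate predecessor. -/
def Markov4 {X Y Z T : Type*} (w : Ω → ℝ)
    (f : Ω → X) (g : Ω → Y) (h : Ω → Z) (k : Ω → T) : Prop :=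
  Markov w f g h ∧ Markov w (fun ω => (f ω, g ω)) h k

variable {𝒜 ℬ ℰ : Type*} [Fintype 𝒜] [Fintype ℬ] [Fintype ℰ]

/-- Weight of the i.i.d. source `(Aⁿ,Bⁿ,Eⁿ)` with per-letter distribution `p`. -/
def iidW (p : 𝒜 × ℬ × ℰ → ℝ) (n : ℕ) : (Fin n → 𝒜 × ℬ × ℰ) → ℝ :=
  fun ω => ∏ i, p (ω i)

/-- Alice's source sequence `Aⁿ`. -/
def An (n : ℕ) : (Fin n → 𝒜 × ℬ × ℰ) → Fin n → 𝒜 := fun ω i => (ω i).1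

/-- Bob's side-information sequence `Bⁿ`. -/
def Bn (n : ℕ) : (Fin n → 𝒜 × ℬ × ℰ) → Fin n → ℬ := fun ω i => (ω i).2.1

/-- Eve's side-information sequence `Eⁿ`. -/
def En (n : ℕ) : (Fin n → 𝒜 × ℬ × ℰ) → Fin n → ℰ := fun ω i => (ω i).2.2

/-- `(R,D,Δ)` is achievable for the memoryless source `p` with distortion measure `d`:
for every `ε > 0` there is an `(n, R+ε)`-code (encoder `f`, decoder `g`, at most
`2^{n(R+ε)}` messages) whose expected distortion at Bob is at most `D + ε` and whose
normalized equivocation at Eve is at least `Δ - ε`. -/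
def Achievable (p : 𝒜 × ℬ × ℰ → ℝ) (d : 𝒜 → 𝒜 → ℝ) (R D Δ : ℝ) : Prop :=
  ∀ ε > (0 : ℝ), ∃ n M : ℕ, 0 < n ∧ 0 < M ∧
    (M : ℝ) ≤ (2 : ℝ) ^ ((n : ℝ) * (R + ε)) ∧
    ∃ (f : (Fin n → 𝒜) → Fin M) (g : Fin M → (Fin n → ℬ) → Fin n → 𝒜),
      expect (iidW p n)
          (fun ω => ((n : ℝ))⁻¹ * ∑ i, d (An n ω i) (g (f (An n ω)) (Bn n ω) i)) ≤ D + ε ∧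
      Δ - ε ≤ ((n : ℝ))⁻¹ * condH (iidW p n) (An n) (fun ω => (f (An n ω), En n ω))

/-- The single-letter region of Theorem 1, with auxiliary alphabets `Fin m` (for `U`)
and `Fin k` (for `V`): there is a joint pmf `q` of `(U,V,A,B,E)` with marginal `p`
on `(A,B,E)`, a Markov chain `U – V – A – (B,E)`, and a function `Â : 𝒱 × ℬ → 𝒜`
such that `R ≥ I(V;A|B)`, `D ≥ E[d(A, Â(V,B))]` and
`Δ ≤ [H(A|V,B) + I(A;B|U) - I(A;E|U)]₊`. -/
def InRegion (p : 𝒜 × ℬ × ℰ → ℝ) (d : 𝒜 → 𝒜 → ℝ) (R D Δ : ℝ) (m k : ℕ) : Prop :=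
  ∃ (q : Fin m × Fin k × 𝒜 × ℬ × ℰ → ℝ) (Ahat : Fin k × ℬ → 𝒜),
    IsPMF q ∧
    (∀ x : 𝒜 × ℬ × ℰ, pr q (fun ω => ω.2.2) x = p x) ∧
    Markov4 q (fun ω => ω.1) (fun ω => ω.2.1) (fun ω => ω.2.2.1) (fun ω => ω.2.2.2) ∧
    condMI q (fun ω => ω.2.1) (fun ω => ω.2.2.1) (fun ω => ω.2.2.2.1) ≤ R ∧
    expect q (fun ω => d ω.2.2.1 (Ahat (ω.2.1, ω.2.2.2.1))) ≤ D ∧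
    Δ ≤ max (condH q (fun ω => ω.2.2.1) (fun ω => (ω.2.1, ω.2.2.2.1))
          + condMI q (fun ω => ω.2.2.1) (fun ω => ω.2.2.2.1) (fun ω => ω.1)
          - condMI q (fun ω => ω.2.2.1) (fun ω => ω.2.2.2.2) (fun ω => ω.1)) 0

/-- Side information `B` (second coordinate) is less noisy than `E` (third coordinate):
`I(U;B) ≥ I(U;E)` for every `U` such that `U – A – (B,E)` is a Markov chain. -/
def LessNoisyBE (p : 𝒜 × ℬ × ℰ → ℝ) : Prop :=
  ∀ (m : ℕ) (q : Fin m × 𝒜 × ℬ × ℰ → ℝ), IsPMF q →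
    (∀ x, pr q (fun ω => ω.2) x = p x) →
    Markov q (fun ω => ω.1) (fun ω => ω.2.1) (fun ω => ω.2.2) →
    MI q (fun ω => ω.1) (fun ω => ω.2.2.2) ≤ MI q (fun ω => ω.1) (fun ω => ω.2.2.1)

/-- Side information `E` (third coordinate) is less noisy than `B` (second coordinate):
`I(U;E) ≥ I(U;B)` for every `U` such that `U – A – (B,E)` is a Markov chain. -/
def LessNoisyEB (p : 𝒜 × ℬ × ℰ → ℝ) : Prop :=
  ∀ (m : ℕ) (q : Fin m × 𝒜 × ℬ × ℰ → ℝ), IsPMF q →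
    (∀ x, pr q (fun ω => ω.2) x = p x) →
    Markov q (fun ω => ω.1) (fun ω => ω.2.1) (fun ω => ω.2.2) →
    MI q (fun ω => ω.1) (fun ω => ω.2.2.1) ≤ MI q (fun ω => ω.1) (fun ω => ω.2.2.2)

/-- The auxiliary random variable `Uᵢ = (W, B_{i+1}ⁿ, E^{i-1})` where `W = f(Aⁿ)`. -/
def auxU {𝒲 : Type*} (n : ℕ) (f : (Fin n → 𝒜) → 𝒲) (i : Fin n)
    (ω : Fin n → 𝒜 × ℬ × ℰ) :
    𝒲 × ({j : Fin n // i < j} → ℬ) × ({j : Fin n // j < i} → ℰ) :=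
  (f (An n ω), fun j => (ω j.1).2.1, fun j => (ω j.1).2.2)

/-- The auxiliary random variable `Vᵢ = (W, A^{i-1}, B^{i-1}, B_{i+1}ⁿ, E^{i-1})`
where `W = f(Aⁿ)`. -/
def auxV {𝒲 : Type*} (n : ℕ) (f : (Fin n → 𝒜) → 𝒲) (i : Fin n)
    (ω : Fin n → 𝒜 × ℬ × ℰ) :
    𝒲 × ({j : Fin n // j < i} → 𝒜) × ({j : Fin n // j < i} → ℬ)
      × ({j : Fin n // i < j} → ℬ) × ({j : Fin n // j < i} → ℰ) :=
  (f (An n ω), fun j => (ω j.1).1, fun j => (ω j.1).2.1,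
    fun j => (ω j.1).2.1, fun j => (ω j.1).2.2)

/-- Binary symmetric channel with crossover probability `p`: `BSC p a e` is the
probability that the output is `e` given that the input is `a`. -/
def BSC (p : ℝ) (a e : Bool) : ℝ := if e = a then 1 - p else p

/-- Binary erasure channel with erasure probability `ε` (output `none` is the erasure
symbol): `BEC ε a b` is the probability that the output is `b` given input `a`. -/
def BEC (ε : ℝ) (a : Bool) (b : Option Bool) : ℝ :=
  match b with
  | some b' => if b' = a then 1 - ε else 0
  | none => ε

/-- Binary entropy function (base 2). -/
def h2 (x : ℝ) : ℝ := -(x * Real.logb 2 x) - (1 - x) * Real.logb 2 (1 - x)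

/-- `sop a b = a ⋆ b = a(1-b) + (1-a)b`. -/
def sop (a b : ℝ) : ℝ := a * (1 - b) + (1 - a) * b

/-- Hamming distortion on `Bool`. -/
def hamming (a a' : Bool) : ℝ := if a = a' then 0 else 1

/-- Joint distribution of `(A,B,E)` for a uniform binary source `A`, with
`B = BEC(ε)(A)` at Bob and `E = BSC(p)(A)` at Eve (independent channel noises). -/
def binSrc (p ε : ℝ) : Bool × Option Bool × Bool → ℝ :=
  fun x => (1 / 2) * BEC ε x.1 x.2.1 * BSC p x.1 x.2.2

/-- Joint distribution of `(U,V,A,B,E)` in the achievability scheme for the binary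
example: `A` uniform, `V = A ⊕ Z_α`, `U = V ⊕ Z_β`, `B = BEC(ε)(A)`, `E = A ⊕ N_p`,
with all noises mutually independent.  Coordinates: `(u,v,a,b,e)`. -/
def exJoint (p ε α β : ℝ) : Bool × Bool × Bool × Option Bool × Bool → ℝ :=
  fun x =>
    (1 / 2) * BSC α x.2.2.1 x.2.1 * BSC β x.2.1 x.1
      * BEC ε x.2.2.1 x.2.2.2.1 * BSC p x.2.2.1 x.2.2.2.2


/-! ### Auxiliary material for `bec_less_noisy_than_bsc` -/

section LessNoisyAux

open Real

/-- `x * log x` (natural log). -/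
def ml (x : ℝ) : ℝ := x * Real.log x

lemma ml_zero : ml 0 = 0 := by simp [ml]

lemma ml_mul {a b : ℝ} (ha : 0 ≤ a) (hb : 0 ≤ b) : ml (a * b) = a * ml b + b * ml a := by
  rcases eq_or_lt_of_le ha with h|h
  · simp [ml, ← h]
  rcases eq_or_lt_of_le hb with h'|h'
  · simp [ml, ← h']
  unfold ml
  rw [Real.log_mul (ne_of_gt h) (ne_of_gt h')]
  ring

/-- The core function whose concavity encodes "BEC(ε) less noisy than BSC(p)". -/
def Gc (p ε : ℝ) (x : ℝ) : ℝ :=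
  ml (p + (1 - 2*p)*x) + ml (1 - p - (1 - 2*p)*x) - (1-ε) * (ml x + ml (1-x))

variable {p ε : ℝ}

lemma Gc_concave (hp0 : 0 ≤ p) (hp : p ≤ 1/2) (hε0 : 0 ≤ ε) (hε1 : ε ≤ 1)
    (h : ε ≤ 4 * p * (1 - p)) : ConcaveOn ℝ (Set.Icc (0:ℝ) 1) (Gc p ε) := by
  obtain ⟨c, hc⟩ : ∃ c : ℝ, c = 1 - 2*p := ⟨_, rfl⟩
  have hIcc : interior (Set.Icc (0:ℝ) 1) = Set.Ioo 0 1 := interior_Icc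
  have hG : Gc p ε = fun x => ml (p + c*x) + ml (1 - p - c*x) - (1-ε) * (ml x + ml (1-x)) := by
    rw [hc]; rfl
  rw [hG]
  refine concaveOn_of_hasDerivWithinAt2_nonpos (convex_Icc 0 1)
    (f' := fun x => c * Real.log (p + c*x) - c * Real.log (1 - p - c*x)
      - (1-ε) * (Real.log x - Real.log (1-x)))
    (f'' := fun x => c^2/(p + c*x) + c^2/(1 - p - c*x) - (1-ε) * (1/x + 1/(1-x)))
    ?_ ?_ ?_ ?_
  · -- continuity
    apply Continuous.continuousOn
    have cml : Continuous ml := Real.continuous_mul_log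
    have c1 : Continuous fun x : ℝ => ml (p + c*x) := cml.comp (by continuity)
    have c2 : Continuous fun x : ℝ => ml (1 - p - c*x) := cml.comp (by continuity)
    have c3 : Continuous fun x : ℝ => ml (1 - x) := cml.comp (by continuity)
    exact (c1.add c2).sub (continuous_const.mul (cml.add c3))
  · -- first derivative
    rw [hIcc]
    intro x hx
    obtain ⟨hx0, hx1⟩ := hx
    have hσ : 0 < p + c*x := by nlinarith
    have hσ' : 0 < 1 - p - c*x := by nlinarith
    have h1 : HasDerivAt (fun x => ml (p + c*x)) ((Real.log (p + c*x) + 1) * c) x := by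
      have := (Real.hasDerivAt_mul_log (ne_of_gt hσ)).comp x
        (((hasDerivAt_id x).const_mul c).const_add p)
      simpa [ml, Function.comp_def] using this
    have h2 : HasDerivAt (fun x => ml (1 - p - c*x)) ((Real.log (1 - p - c*x) + 1) * (-c)) x := by
      have hd : HasDerivAt (fun x : ℝ => 1 - p - c*x) (-c) x := by
        simpa using (((hasDerivAt_id x).const_mul c).const_sub (1-p))
      have := (Real.hasDerivAt_mul_log (ne_of_gt hσ')).comp x hd
      simpa [ml, Function.comp_def] using this
    have h3 : HasDerivAt ml (Real.log x + 1) x := Real.hasDerivAt_mul_log (ne_of_gt hx0)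
    have h4 : HasDerivAt (fun x => ml (1-x)) ((Real.log (1-x) + 1) * (-1)) x := by
      have hd : HasDerivAt (fun x : ℝ => 1 - x) (-1) x := by
        simpa using ((hasDerivAt_id x).const_sub 1)
      have := (Real.hasDerivAt_mul_log (x := 1-x) (by linarith)).comp x hd
      simpa [ml, Function.comp_def] using this
    have := ((h1.add h2).sub (((h3.add h4)).const_mul (1-ε)))
    refine HasDerivAt.hasDerivWithinAt ?_
    exact this.congr_deriv (by ring)
  · -- second derivative
    rw [hIcc]
    intro x hx
    obtain ⟨hx0, hx1⟩ := hx
    have hσ : 0 < p + c*x := by nlinarith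
    have hσ' : 0 < 1 - p - c*x := by nlinarith
    have h1 : HasDerivAt (fun x => Real.log (p + c*x)) (c / (p + c*x)) x := by
      have := (Real.hasDerivAt_log (ne_of_gt hσ)).comp x
        (((hasDerivAt_id x).const_mul c).const_add p)
      simpa [Function.comp_def, div_eq_inv_mul] using this
    have h2 : HasDerivAt (fun x => Real.log (1 - p - c*x)) (-c / (1 - p - c*x)) x := by
      have hd : HasDerivAt (fun x : ℝ => 1 - p - c*x) (-c) x := by
        simpa using (((hasDerivAt_id x).const_mul c).const_sub (1-p))
      have := (Real.hasDerivAt_log (ne_of_gt hσ')).comp x hd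
      simpa [Function.comp_def, div_eq_inv_mul, mul_comm] using this
    have h3 : HasDerivAt Real.log (1/x) x := by
      simpa [one_div] using Real.hasDerivAt_log (ne_of_gt hx0)
    have h4 : HasDerivAt (fun x => Real.log (1-x)) (-(1/(1-x))) x := by
      have hd : HasDerivAt (fun x : ℝ => 1 - x) (-1) x := by
        simpa using ((hasDerivAt_id x).const_sub 1)
      have := (Real.hasDerivAt_log (x := 1-x) (by linarith)).comp x hd
      simpa [Function.comp_def, one_div] using this
    have := (((h1.const_mul c).sub (h2.const_mul c)).sub ((h3.sub h4).const_mul (1-ε)))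
    refine HasDerivAt.hasDerivWithinAt ?_
    exact this.congr_deriv (by ring)
  · -- nonpositivity
    rw [hIcc]
    intro x hx
    obtain ⟨hx0, hx1⟩ := hx
    have hx1' : (0:ℝ) < 1 - x := by linarith
    have hσ : 0 < p + c*x := by nlinarith
    have hσ' : 0 < 1 - p - c*x := by nlinarith
    rw [sub_nonpos]
    have e1 : c^2/(p+c*x) + c^2/(1-p-c*x) = c^2 / ((p+c*x)*(1-p-c*x)) := by
      field_simp
      ring
    have e2 : (1:ℝ)/x + 1/(1-x) = 1 / (x*(1-x)) := by
      field_simp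
      ring
    rw [e1, e2, mul_one_div, div_le_div_iff₀ (by positivity) (by positivity)]
    have hX4 : x*(1-x) ≤ 1/4 := by nlinarith [sq_nonneg (x - 1/2)]
    have hcsq : c^2 = 1 - 4*p*(1-p) := by rw [hc]; ring
    have hc2 : c^2 ≤ 1 - ε := by linarith
    have hσσ : (p+c*x)*(1-p-c*x) = p*(1-p) + c^2*(x*(1-x)) := by rw [hc]; ring
    rw [hσσ]
    have h1 : ε*c^2*(x*(1-x)) ≤ ε*c^2*(1/4) :=
      mul_le_mul_of_nonneg_left hX4 (mul_nonneg hε0 (sq_nonneg c))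
    have h2 : ε*c^2 ≤ ε*(1-ε) := mul_le_mul_of_nonneg_left hc2 hε0
    have h3 : (1-ε)*ε ≤ (1-ε)*(4*p*(1-p)) := mul_le_mul_of_nonneg_left h (by linarith)
    linarith [h1, h2, h3]

/-- Splitting a joint weight `(a, b)` into total weight times the value of `Gc`. -/
lemma ml_split (hp0 : 0 ≤ p) (hp1 : p ≤ 1/2) (hε0 : 0 ≤ ε) (hε1 : ε ≤ 1)
    (a b : ℝ) (ha : 0 ≤ a) (hb : 0 ≤ b) :
    (ml ((1-p)*a + p*b) + ml (p*a + (1-p)*b))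
      - (ml ((1-ε)*a) + ml ((1-ε)*b) + ml (ε*(a+b)))
    = (a+b) * Gc p ε (a/(a+b)) - (a+b) * (ml ε + ml (1-ε)) := by
  rcases eq_or_lt_of_le (add_nonneg ha hb) with hw|hw
  · have ha0 : a = 0 := by linarith
    have hb0 : b = 0 := by linarith
    simp [ha0, hb0, ml_zero]
  · have hx0 : 0 ≤ a/(a+b) := div_nonneg ha hw.le
    have hx1 : a/(a+b) ≤ 1 := by
      rw [div_le_one hw]; linarith
    set x := a/(a+b) with hxdef
    have ha' : a = (a+b)*x := by
      rw [hxdef]; field_simp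
    have hb' : b = (a+b)*(1-x) := by
      rw [hxdef]; field_simp; ring
    have hσ0 : 0 ≤ p + (1-2*p)*x := by nlinarith
    have hσ'0 : 0 ≤ 1 - p - (1-2*p)*x := by nlinarith
    have e1 : ml ((1-p)*a + p*b)
        = (a+b) * ml (p+(1-2*p)*x) + (p+(1-2*p)*x) * ml (a+b) := by
      rw [show (1-p)*a + p*b = (a+b)*(p+(1-2*p)*x) from by rw [hxdef]; field_simp; ring]
      exact ml_mul hw.le hσ0
    have e2 : ml (p*a + (1-p)*b)
        = (a+b) * ml (1-p-(1-2*p)*x) + (1-p-(1-2*p)*x) * ml (a+b) := by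
      rw [show p*a + (1-p)*b = (a+b)*(1-p-(1-2*p)*x) from by rw [hxdef]; field_simp; ring]
      exact ml_mul hw.le hσ'0
    have e3 : ml ((1-ε)*a) = (1-ε) * ml a + a * ml (1-ε) := ml_mul (by linarith) ha
    have e4 : ml ((1-ε)*b) = (1-ε) * ml b + b * ml (1-ε) := ml_mul (by linarith) hb
    have e5 : ml (ε*(a+b)) = ε * ml (a+b) + (a+b) * ml ε := ml_mul hε0 hw.le
    have e6 : ml a = (a+b) * ml x + x * ml (a+b) := by
      conv_lhs => rw [ha']
      exact ml_mul hw.le hx0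
    have e7 : ml b = (a+b) * ml (1-x) + (1-x) * ml (a+b) := by
      conv_lhs => rw [hb']
      exact ml_mul hw.le (by linarith)
    rw [e1, e2, e3, e4, e5, e6, e7]
    simp only [Gc]
    ring

/-- The key summation inequality (Jensen for `Gc`). -/
lemma main_sum_ineq (hp0 : 0 ≤ p) (hp1 : p ≤ 1/2) (hε0 : 0 ≤ ε) (hε1 : ε ≤ 1)
    (h : ε ≤ 4 * p * (1-p)) {m : ℕ} (t f : Fin m → ℝ)
    (htn : ∀ u, 0 ≤ t u) (hfn : ∀ u, 0 ≤ f u)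
    (hsum : ∑ u, (t u + f u) = 1) :
    (∑ u, (ml ((1-p)*t u + p*f u) + ml (p*t u + (1-p)*f u)))
      - (∑ u, (ml ((1-ε)*t u) + ml ((1-ε)*f u) + ml (ε*(t u + f u))))
    ≤ (ml ((1-p)*(∑ u, t u) + p*(∑ u, f u)) + ml (p*(∑ u, t u) + (1-p)*(∑ u, f u)))
      - (ml ((1-ε)*(∑ u, t u)) + ml ((1-ε)*(∑ u, f u))
          + ml (ε*((∑ u, t u) + (∑ u, f u)))) := by
  have hT : 0 ≤ ∑ u, t u := Finset.sum_nonneg fun u _ => htn u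
  have hF : 0 ≤ ∑ u, f u := Finset.sum_nonneg fun u _ => hfn u
  have hTF : (∑ u, t u) + (∑ u, f u) = 1 := by
    rw [← Finset.sum_add_distrib]; exact hsum
  rw [← Finset.sum_sub_distrib]
  have hRHS : (ml ((1-p)*(∑ u, t u) + p*(∑ u, f u)) + ml (p*(∑ u, t u) + (1-p)*(∑ u, f u)))
      - (ml ((1-ε)*(∑ u, t u)) + ml ((1-ε)*(∑ u, f u))
          + ml (ε*((∑ u, t u) + (∑ u, f u))))
      = Gc p ε (∑ u, t u) - (ml ε + ml (1-ε)) := by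
    rw [ml_split hp0 hp1 hε0 hε1 _ _ hT hF, hTF]
    simp
  rw [hRHS]
  have hLHS : ∀ u, (ml ((1-p)*t u + p*f u) + ml (p*t u + (1-p)*f u))
      - (ml ((1-ε)*t u) + ml ((1-ε)*f u) + ml (ε*(t u + f u)))
      = (t u + f u) * Gc p ε (t u/(t u + f u)) - (t u + f u) * (ml ε + ml (1-ε)) :=
    fun u => ml_split hp0 hp1 hε0 hε1 _ _ (htn u) (hfn u)
  rw [Finset.sum_congr rfl fun u _ => hLHS u]
  rw [Finset.sum_sub_distrib, ← Finset.sum_mul, hsum, one_mul]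
  have hconc := Gc_concave hp0 hp1 hε0 hε1 h
  have hmem : ∀ u : Fin m, t u/(t u + f u) ∈ Set.Icc (0:ℝ) 1 := by
    intro u
    constructor
    · exact div_nonneg (htn u) (add_nonneg (htn u) (hfn u))
    · rcases eq_or_lt_of_le (add_nonneg (htn u) (hfn u)) with hw|hw
      · rw [← hw]; simp
      · rw [div_le_one hw]; linarith [hfn u]
  have hjen := hconc.le_map_sum (t := Finset.univ)
    (w := fun u => t u + f u) (p := fun u => t u/(t u + f u))
    (fun u _ => add_nonneg (htn u) (hfn u)) hsum (fun u _ => hmem u)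
  have hwx : ∑ u, (t u + f u) • (t u/(t u + f u)) = ∑ u, t u := by
    refine Finset.sum_congr rfl fun u _ => ?_
    rcases eq_or_lt_of_le (add_nonneg (htn u) (hfn u)) with hw|hw
    · have h0 : t u = 0 := by linarith [htn u, hfn u]
      rw [h0]; simp
    · rw [smul_eq_mul, mul_div_cancel₀ _ (ne_of_gt hw)]
  rw [hwx] at hjen
  have : ∑ u, (t u + f u) * Gc p ε (t u/(t u + f u)) ≤ Gc p ε (∑ u, t u) := by
    simpa [smul_eq_mul] using hjen
  linarith

end LessNoisyAux

section PrAux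

variable {m : ℕ} (q : Fin m × Bool × Option Bool × Bool → ℝ)

lemma pr_nonneg {X : Type*} {w : Ω → ℝ} (hw : ∀ ω, 0 ≤ w ω) (f : Ω → X) (x : X) :
    0 ≤ pr w f x := by
  classical
  apply Finset.sum_nonneg
  intro ω _
  split <;> simp [hw ω]

lemma pr_total {X : Type*} [Fintype X] (w : Ω → ℝ) (f : Ω → X) :
    ∑ x, pr w f x = ∑ ω, w ω := by
  classical
  unfold pr
  rw [Finset.sum_comm]
  refine Finset.sum_congr rfl fun ω _ => ?_
  simp [Finset.sum_ite_eq]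

open Classical in
lemma pr_fst_marg {X Y : Type*} [Fintype Y] (w : Ω → ℝ) (g : Ω → X) (k : Ω → Y) (x : X) :
    pr w g x = ∑ y, pr w (fun ω => (k ω, g ω)) (y, x) := by
  unfold pr
  rw [Finset.sum_comm]
  refine Finset.sum_congr rfl fun ω _ => ?_
  simp [Prod.ext_iff, ite_and, Finset.sum_ite_eq]

variable {p ε : ℝ}
variable (hstruct : ∀ u a b e,
      q (u, a, b, e) = pr q (fun ω => (ω.1, ω.2.1)) (u, a) * BEC ε a b * BSC p a e)

section
include hstruct

open Classical in
lemma margUE (u : Fin m) (e0 : Bool) :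
    pr q (fun ω => (ω.1, ω.2.2.2)) (u, e0)
      = BSC p true e0 * pr q (fun ω => (ω.1, ω.2.1)) (u, true)
        + BSC p false e0 * pr q (fun ω => (ω.1, ω.2.1)) (u, false) := by
  have e1 : pr q (fun ω => (ω.1, ω.2.2.2)) (u, e0)
      = ∑ u', ∑ a, ∑ b, ∑ e, if u' = u ∧ e = e0 then q (u',a,b,e) else 0 := by
    rw [pr, Fintype.sum_prod_type]
    refine Finset.sum_congr rfl fun u' _ => ?_
    rw [Fintype.sum_prod_type]
    refine Finset.sum_congr rfl fun a _ => ?_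
    rw [Fintype.sum_prod_type]
    refine Finset.sum_congr rfl fun b _ => ?_
    refine Finset.sum_congr rfl fun e _ => ?_
    simp [Prod.ext_iff]
  rw [e1]
  simp only [hstruct, BEC, BSC]
  rw [Finset.sum_eq_single u]
  · cases e0 <;>
    · simp [Fintype.sum_option]
      ring
  · intro b _ hb
    simp [hb]
  · simp

open Classical in
lemma margUB (u : Fin m) (b0 : Option Bool) :
    pr q (fun ω => (ω.1, ω.2.2.1)) (u, b0)
      = BEC ε true b0 * pr q (fun ω => (ω.1, ω.2.1)) (u, true)
        + BEC ε false b0 * pr q (fun ω => (ω.1, ω.2.1)) (u, false) := by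
  have e1 : pr q (fun ω => (ω.1, ω.2.2.1)) (u, b0)
      = ∑ u', ∑ a, ∑ b, ∑ e, if u' = u ∧ b = b0 then q (u',a,b,e) else 0 := by
    rw [pr, Fintype.sum_prod_type]
    refine Finset.sum_congr rfl fun u' _ => ?_
    rw [Fintype.sum_prod_type]
    refine Finset.sum_congr rfl fun a _ => ?_
    rw [Fintype.sum_prod_type]
    refine Finset.sum_congr rfl fun b _ => ?_
    refine Finset.sum_congr rfl fun e _ => ?_
    simp [Prod.ext_iff]
  rw [e1]
  simp only [hstruct, BEC, BSC]
  rw [Finset.sum_eq_single u]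
  · rcases b0 with _ | b0'
    · simp [Fintype.sum_option]
      ring
    · cases b0' <;>
      · simp [Fintype.sum_option]
        ring
  · intro b _ hb
    simp [hb]
  · simp

end
end PrAux

/-- **Less noisy comparison of BEC and BSC** for `ε ≤ 4p(1-p)`: for any binary random
variable `A` with `B = BEC(ε)(A)`, `E = BSC(p)(A)`, and any `U` with `U – A – (B,E)`
a Markov chain (i.e. the joint pmf factorizes as `P(U,A)·BEC(ε)·BSC(p)`),
`I(U;B) ≥ I(U;E)`. -/
theorem bec_less_noisy_than_bsc (p ε : ℝ)
    (hp : p ∈ Set.Icc (0 : ℝ) (1 / 2)) (hε : ε ∈ Set.Icc (0 : ℝ) 1)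
    (h : ε ≤ 4 * p * (1 - p))
    (m : ℕ) (q : Fin m × Bool × Option Bool × Bool → ℝ) (hq : IsPMF q)
    (hstruct : ∀ u a b e,
      q (u, a, b, e) = pr q (fun ω => (ω.1, ω.2.1)) (u, a) * BEC ε a b * BSC p a e) :
    MI q (fun ω => ω.1) (fun ω => ω.2.2.2)
      ≤ MI q (fun ω => ω.1) (fun ω => ω.2.2.1) := by
  obtain ⟨hp0, hp1⟩ := hp
  obtain ⟨hε0, hε1⟩ := hε
  classical
  set t : Fin m → ℝ := fun u => pr q (fun ω => (ω.1, ω.2.1)) (u, true) with htdef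
  set f : Fin m → ℝ := fun u => pr q (fun ω => (ω.1, ω.2.1)) (u, false) with hfdef
  have htn : ∀ u, 0 ≤ t u := fun u => pr_nonneg hq.1 _ _
  have hfn : ∀ u, 0 ≤ f u := fun u => pr_nonneg hq.1 _ _
  have hsum1 : ∑ u, (t u + f u) = 1 := by
    have h1 := pr_total q (fun ω => (ω.1, ω.2.1))
    rw [hq.2] at h1
    rw [← h1, Fintype.sum_prod_type]
    refine Finset.sum_congr rfl fun u _ => ?_
    rw [Fintype.sum_bool]
  have hUEt : ∀ u, pr q (fun ω => (ω.1, ω.2.2.2)) (u, true) = (1-p)*t u + p*f u := by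
    intro u
    rw [margUE q hstruct u true]
    simp only [BSC, htdef, hfdef]
    norm_num
  have hUEf : ∀ u, pr q (fun ω => (ω.1, ω.2.2.2)) (u, false) = p*t u + (1-p)*f u := by
    intro u
    rw [margUE q hstruct u false]
    simp only [BSC, htdef, hfdef]
    norm_num
  have hUBt : ∀ u, pr q (fun ω => (ω.1, ω.2.2.1)) (u, some true) = (1-ε)*t u := by
    intro u
    rw [margUB q hstruct u (some true)]
    simp only [BEC, htdef, hfdef]
    norm_num
  have hUBf : ∀ u, pr q (fun ω => (ω.1, ω.2.2.1)) (u, some false) = (1-ε)*f u := by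
    intro u
    rw [margUB q hstruct u (some false)]
    simp only [BEC, htdef, hfdef]
    norm_num
  have hUBn : ∀ u, pr q (fun ω => (ω.1, ω.2.2.1)) (u, none) = ε*(t u + f u) := by
    intro u
    rw [margUB q hstruct u none]
    simp only [BEC, htdef, hfdef]
    ring
  have hEt : pr q (fun ω => ω.2.2.2) true = (1-p)*(∑ u, t u) + p*(∑ u, f u) := by
    rw [pr_fst_marg q (fun ω => ω.2.2.2) (fun ω => ω.1) true]
    rw [Finset.sum_congr rfl fun u _ => hUEt u]
    rw [Finset.sum_add_distrib, ← Finset.mul_sum, ← Finset.mul_sum]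
  have hEf : pr q (fun ω => ω.2.2.2) false = p*(∑ u, t u) + (1-p)*(∑ u, f u) := by
    rw [pr_fst_marg q (fun ω => ω.2.2.2) (fun ω => ω.1) false]
    rw [Finset.sum_congr rfl fun u _ => hUEf u]
    rw [Finset.sum_add_distrib, ← Finset.mul_sum, ← Finset.mul_sum]
  have hBt : pr q (fun ω => ω.2.2.1) (some true) = (1-ε)*(∑ u, t u) := by
    rw [pr_fst_marg q (fun ω => ω.2.2.1) (fun ω => ω.1) (some true)]
    rw [Finset.sum_congr rfl fun u _ => hUBt u]
    rw [← Finset.mul_sum]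
  have hBf : pr q (fun ω => ω.2.2.1) (some false) = (1-ε)*(∑ u, f u) := by
    rw [pr_fst_marg q (fun ω => ω.2.2.1) (fun ω => ω.1) (some false)]
    rw [Finset.sum_congr rfl fun u _ => hUBf u]
    rw [← Finset.mul_sum]
  have hBn : pr q (fun ω => ω.2.2.1) none = ε*((∑ u, t u) + (∑ u, f u)) := by
    rw [pr_fst_marg q (fun ω => ω.2.2.1) (fun ω => ω.1) none]
    rw [Finset.sum_congr rfl fun u _ => hUBn u]
    rw [← Finset.mul_sum, Finset.sum_add_distrib]
  -- closed forms for the four entropies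
  have hHUE : H q (fun ω => (ω.1, ω.2.2.2))
      = -((∑ u, (ml ((1-p)*t u + p*f u) + ml (p*t u + (1-p)*f u))) / Real.log 2) := by
    rw [H, Fintype.sum_prod_type]
    congr 1
    rw [Finset.sum_div]
    refine Finset.sum_congr rfl fun u _ => ?_
    rw [Fintype.sum_bool]
    rw [hUEt u, hUEf u]
    simp only [ml, Real.logb]
    ring
  have hHUB : H q (fun ω => (ω.1, ω.2.2.1))
      = -((∑ u, (ml ((1-ε)*t u) + ml ((1-ε)*f u) + ml (ε*(t u + f u)))) / Real.log 2) := by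
    rw [H, Fintype.sum_prod_type]
    congr 1
    rw [Finset.sum_div]
    refine Finset.sum_congr rfl fun u _ => ?_
    rw [Fintype.sum_option, Fintype.sum_bool]
    rw [hUBt u, hUBf u, hUBn u]
    simp only [ml, Real.logb]
    ring
  have hHE : H q (fun ω => ω.2.2.2)
      = -((ml ((1-p)*(∑ u, t u) + p*(∑ u, f u)) + ml (p*(∑ u, t u) + (1-p)*(∑ u, f u)))
          / Real.log 2) := by
    rw [H, Fintype.sum_bool]
    congr 1
    rw [hEt, hEf]
    simp only [ml, Real.logb]
    ring
  have hHB : H q (fun ω => ω.2.2.1)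
      = -((ml ((1-ε)*(∑ u, t u)) + ml ((1-ε)*(∑ u, f u))
            + ml (ε*((∑ u, t u) + (∑ u, f u)))) / Real.log 2) := by
    rw [H, Fintype.sum_option, Fintype.sum_bool]
    rw [hBt, hBf, hBn]
    simp only [ml, Real.logb]
    ring
  have key := main_sum_ineq hp0 hp1 hε0 hε1 h t f htn hfn hsum1
  have L2 : (0:ℝ) < Real.log 2 := Real.log_pos (by norm_num)
  have key2 : ((∑ u, (ml ((1-p)*t u + p*f u) + ml (p*t u + (1-p)*f u)))
      - (∑ u, (ml ((1-ε)*t u) + ml ((1-ε)*f u) + ml (ε*(t u + f u))))) / Real.log 2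
      ≤ ((ml ((1-p)*(∑ u, t u) + p*(∑ u, f u)) + ml (p*(∑ u, t u) + (1-p)*(∑ u, f u)))
        - (ml ((1-ε)*(∑ u, t u)) + ml ((1-ε)*(∑ u, f u))
            + ml (ε*((∑ u, t u) + (∑ u, f u))))) / Real.log 2 := by
    gcongr
  simp only [MI]
  rw [hHUE, hHUB, hHE, hHB]
  rw [sub_div, sub_div] at key2
  linarith [key2]

end SLSC

end
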